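/- arXiv:2008.07129 — 2 statements merged into one kernel-verified Lean document; each statement's English description precedes it below -/
import Mathlib

section
/- Let d, α, β be nonzero complex numbers with |β| = 1 satisfying α = κ·d·β⁻¹ + β and α⁻¹ = κ·d·β + β⁻¹, where κ = ±1. Then d = -κ·(β² + β⁻²) and α = -β⁻³. -/
theorem stmt_0 (d α β κ : ℂ) (hd : d ≠ 0) (hα : α ≠ 0) (hβ : β ≠ 0)
    (hβabs : ‖β‖ = 1) (hκ : κ = 1 ∨ κ = -1)
    (h1 : α = κ * d * β⁻¹ + β) (h2 : α⁻¹ = κ * d * β + β⁻¹) :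
    d = -κ * (β ^ 2 + (β ^ 2)⁻¹) ∧ α = -(β ^ 3)⁻¹ := by
  have key : (κ * d * β⁻¹ + β) * (κ * d * β + β⁻¹) = 1 := by
    rw [← h1, ← h2]; exact mul_inv_cancel₀ hα
  rcases hκ with hκ | hκ <;> subst hκ
  · have h3 : d * (d + (β ^ 2 + (β ^ 2)⁻¹)) = 0 := by
      field_simp at key ⊢
      linear_combination key
    have h4 : d + (β ^ 2 + (β ^ 2)⁻¹) = 0 := by
      rcases mul_eq_zero.1 h3 with h | h
      · exact absurd h hd
      · exact h
    constructor
    · linear_combination h4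
    · rw [h1]
      have : d = -(β ^ 2 + (β ^ 2)⁻¹) := by linear_combination h4
      rw [this]
      field_simp
      ring
  · have h3 : d * (-d + (β ^ 2 + (β ^ 2)⁻¹)) = 0 := by
      field_simp at key ⊢
      linear_combination -key
    have h4 : -d + (β ^ 2 + (β ^ 2)⁻¹) = 0 := by
      rcases mul_eq_zero.1 h3 with h | h
      · exact absurd h hd
      · exact h
    constructor
    · linear_combination -h4
    · rw [h1]
      have : d = (β ^ 2 + (β ^ 2)⁻¹) := by linear_combination -h4
      rw [this]
      field_simp
      ring
end

section
/- Let d_q > 1, d_x, d_y > 0 with d_q² = 1 + d_x + d_y and κ = 1. The 3×3 matrix F of the Dubrovnik case (with the minus signs and denominator (d_q - 1)d_q) has trace 1, hence (being a symmetric involution) eigenvalues {+1, +1, -1}. The matrix of the Kauffman case (plus signs, denominator (d_q + 1)d_q, and subtracting 1 on the diagonal) has trace -1, hence eigenvalues {+1, -1, -1}. -/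
set_option maxHeartbeats 2000000 in
open Polynomial in
theorem stmt_10 (dq dx dy : ℝ) (hdq : 1 < dq) (hdx : 0 < dx) (hdy : 0 < dy)
    (hsum : dq ^ 2 = 1 + dx + dy) :
    let FD : Matrix (Fin 3) (Fin 3) ℝ :=
      !![1 / dq, Real.sqrt dx / dq, Real.sqrt dy / dq;
         Real.sqrt dx / dq, -dx / ((dq - 1) * dq) + 1,
           -Real.sqrt (dx * dy) / ((dq - 1) * dq);
         Real.sqrt dy / dq, -Real.sqrt (dx * dy) / ((dq - 1) * dq),
           -dy / ((dq - 1) * dq) + 1]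
    let FK : Matrix (Fin 3) (Fin 3) ℝ :=
      !![1 / dq, Real.sqrt dx / dq, Real.sqrt dy / dq;
         Real.sqrt dx / dq, dx / ((dq + 1) * dq) - 1,
           Real.sqrt (dx * dy) / ((dq + 1) * dq);
         Real.sqrt dy / dq, Real.sqrt (dx * dy) / ((dq + 1) * dq),
           dy / ((dq + 1) * dq) - 1]
    FD.trace = 1 ∧ FD.charpoly = (X - C 1) ^ 2 * (X + C 1) ∧
      FK.trace = -1 ∧ FK.charpoly = (X - C 1) * (X + C 1) ^ 2 := by
  obtain ⟨sx, hsx, rfl⟩ : ∃ s : ℝ, 0 ≤ s ∧ dx = s ^ 2 :=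
    ⟨Real.sqrt dx, Real.sqrt_nonneg _, (Real.sq_sqrt hdx.le).symm⟩
  obtain ⟨sy, hsy, rfl⟩ : ∃ s : ℝ, 0 ≤ s ∧ dy = s ^ 2 :=
    ⟨Real.sqrt dy, Real.sqrt_nonneg _, (Real.sq_sqrt hdy.le).symm⟩
  intro FD FK
  have hq0 : dq ≠ 0 := by linarith
  have hq1 : dq - 1 ≠ 0 := by intro h; linarith [sub_eq_zero.mp h]
  have hq2 : dq + 1 ≠ 0 := by positivity
  have hsq : Real.sqrt (sx ^ 2 * sy ^ 2) = sx * sy := by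
    rw [Real.sqrt_mul (by positivity), Real.sqrt_sq hsx, Real.sqrt_sq hsy]
  refine ⟨?_, ?_, ?_, ?_⟩
  · rw [Matrix.trace_fin_three]
    simp only [Matrix.of_apply, FD, Matrix.cons_val', Matrix.cons_val_zero, Matrix.cons_val_one,
      Matrix.head_cons, Matrix.empty_val', Matrix.cons_val_fin_one, Matrix.head_fin_const,
      Matrix.cons_val_two, Matrix.tail_cons, Real.sqrt_sq hsx, Real.sqrt_sq hsy, hsq]
    field_simp
    linear_combination hsum
  · apply Polynomial.funext
    intro z
    rw [Matrix.charpoly, Matrix.det_fin_three]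
    simp only [Matrix.of_apply, Matrix.charmatrix_apply, Matrix.diagonal_apply, FD,
      Matrix.cons_val', Matrix.cons_val_zero, Matrix.cons_val_one, Matrix.head_cons,
      Matrix.empty_val', Matrix.cons_val_fin_one, Matrix.head_fin_const,
      Matrix.cons_val_two, Matrix.tail_cons, Real.sqrt_sq hsx, Real.sqrt_sq hsy, hsq,
      show ((1:Fin 3) = 2) = False from by decide, show ((2:Fin 3) = 1) = False from by decide,
      show ((0:Fin 3) = 2) = False from by decide, show ((2:Fin 3) = 0) = False from by decide,
      if_false, if_true, eq_self_iff_true]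
    norm_num
    field_simp
    linear_combination ((z - 1) ^ 2 * dq ^ 2 * (1 - dq)) * hsum
  · rw [Matrix.trace_fin_three]
    simp only [Matrix.of_apply, FK, Matrix.cons_val', Matrix.cons_val_zero, Matrix.cons_val_one,
      Matrix.head_cons, Matrix.empty_val', Matrix.cons_val_fin_one, Matrix.head_fin_const,
      Matrix.cons_val_two, Matrix.tail_cons, Real.sqrt_sq hsx, Real.sqrt_sq hsy, hsq]
    field_simp
    linear_combination -hsum
  · apply Polynomial.funext
    intro z
    rw [Matrix.charpoly, Matrix.det_fin_three]
    simp only [Matrix.of_apply, Matrix.charmatrix_apply, Matrix.diagonal_apply, FK,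
      Matrix.cons_val', Matrix.cons_val_zero, Matrix.cons_val_one, Matrix.head_cons,
      Matrix.empty_val', Matrix.cons_val_fin_one, Matrix.head_fin_const,
      Matrix.cons_val_two, Matrix.tail_cons, Real.sqrt_sq hsx, Real.sqrt_sq hsy, hsq,
      show ((1:Fin 3) = 2) = False from by decide, show ((2:Fin 3) = 1) = False from by decide,
      show ((0:Fin 3) = 2) = False from by decide, show ((2:Fin 3) = 0) = False from by decide,
      if_false, if_true, eq_self_iff_true]
    norm_num
    field_simp
    linear_combination ((z + 1) ^ 2 * dq ^ 2 * (1 + dq)) * hsum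
end
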